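/- Let S be a gcd-closed set of distinct positive integers and e a positive integer. Then α_{e,S}(x) > 0 for every x ∈ S, where α_{e,S}(x) = Σ_{d | x, d ∤ y for all y ∈ S with y < x} (ξ_e * μ)(d). -/

import Mathlib

open Finset

/-- `(ξ_e * μ)(d)`: Dirichlet convolution of `n ↦ n^e` with the Möbius function. -/
def xiMu (e d : ℕ) : ℤ :=
  ∑ a ∈ d.divisors, (a : ℤ) ^ e * ArithmeticFunction.moebius (d / a)

/-- `α_{e,S}(x) = Σ_{d ∣ x, d ∤ y for all y ∈ S with y < x} (ξ_e * μ)(d)`. -/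
def alphaES (e : ℕ) (S : Finset ℕ) (x : ℕ) : ℤ :=
  ∑ d ∈ x.divisors.filter (fun d => ∀ y ∈ S, y < x → ¬ d ∣ y), xiMu e d

/-- The set of greatest-type divisors of `x` in `S`. -/
def GS (S : Finset ℕ) (x : ℕ) : Finset ℕ :=
  S.filter (fun y => y ∣ x ∧ y < x ∧ ∀ z ∈ S, y ∣ z → z ∣ x → z = y ∨ z = x)

/-- An element `x` satisfies condition 𝒞 relative to `S`. -/
def condCElem (S : Finset ℕ) (x : ℕ) : Prop :=
  ∀ y ∈ GS S x, ∀ z ∈ GS S x, y ≠ z → Nat.lcm y z = x ∧ Nat.gcd y z ∈ GS S y ∩ GS S z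

/-- A set satisfies condition 𝒞 if every element with at least two
greatest-type divisors satisfies condition 𝒞. -/
def condCSet (S : Finset ℕ) : Prop :=
  ∀ x ∈ S, 2 ≤ (GS S x).card → condCElem S x

/-- `A_S(a,b) = {u ∈ S : a ∣ u ∣ b, u ≠ a}`. -/
def AS (S : Finset ℕ) (a b : ℕ) : Finset ℕ :=
  S.filter (fun u => a ∣ u ∧ u ∣ b ∧ u ≠ a)

/-- `c_{rm}` (with `xr, xm` the actual elements): sum of `μ(d)` over `d` with
`d·xr ∣ xm` and `d·xr ∤ t` for all `t ∈ S` with `t < xm`. -/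
def cCoef (S : Finset ℕ) (xr xm : ℕ) : ℤ :=
  ∑ d ∈ xm.divisors.filter (fun d => d * xr ∣ xm ∧ ∀ t ∈ S, t < xm → ¬ d * xr ∣ t),
    ArithmeticFunction.moebius d

/-- `g(k,m)` (with `xk, xm` the actual elements). -/
noncomputable def gFun (e : ℕ) (S : Finset ℕ) (xk xm : ℕ) : ℚ :=
  (1 / (alphaES e S xm : ℚ)) *
    ∑ r ∈ S.filter (fun r => r ∣ xm), (cCoef S r xm : ℚ) * (Nat.lcm xk r : ℚ) ^ e

section XiMuAux
open ArithmeticFunction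
open scoped ArithmeticFunction.Moebius
lemma xiMu_eq (e d : ℕ) :
    xiMu e d = ((pow e : ArithmeticFunction ℤ) * μ) d := by
  unfold xiMu
  rw [mul_apply, Nat.sum_divisorsAntidiagonal (fun a b => (pow e : ArithmeticFunction ℤ) a * μ b)]
  refine Finset.sum_congr rfl fun a ha => ?_
  rw [Nat.mem_divisors] at ha
  have ha0 : a ≠ 0 := fun h => ha.2 (by simpa [h] using ha.1)
  simp [pow_apply, ha0]

lemma xiMu_prime_pow (e : ℕ) {p : ℕ} (hpp : p.Prime) (k : ℕ) (hk : 1 ≤ k) :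
    ((pow e : ArithmeticFunction ℤ) * μ) (p ^ k) = (p:ℤ)^(k*e) - (p:ℤ)^((k-1)*e) := by
  obtain ⟨m, rfl⟩ : ∃ m, k = m + 1 := ⟨k-1, by omega⟩
  rw [mul_apply, Nat.sum_divisorsAntidiagonal (fun a b => (pow e : ArithmeticFunction ℤ) a * μ b),
    Nat.sum_divisors_prime_pow hpp, Finset.sum_range_succ, Finset.sum_range_succ]
  have h0 : ∀ i ∈ Finset.range m,
      (pow e : ArithmeticFunction ℤ) (p^i) * μ (p^(m+1) / p^i) = 0 := by
    intro i hi
    rw [Finset.mem_range] at hi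
    rw [Nat.pow_div (by omega) hpp.pos, moebius_apply_prime_pow hpp (by omega), if_neg (by omega),
      mul_zero]
  rw [Finset.sum_eq_zero h0, zero_add]
  rw [Nat.pow_div (by omega) hpp.pos, Nat.pow_div (by omega) hpp.pos]
  simp only [Nat.add_sub_cancel, Nat.add_sub_cancel_left, Nat.sub_self, pow_zero, pow_one,
    moebius_apply_prime hpp, moebius_apply_one, natCoe_apply, pow_apply, mul_one,
    pow_eq_zero_iff', hpp.ne_zero, false_and, if_false]
  push_cast
  rw [← pow_mul, ← pow_mul]
  simp only [and_false, if_false]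
  ring

lemma xiMu_pos {e : ℕ} (he : 0 < e) {d : ℕ} (hd : 0 < d) : 0 < xiMu e d := by
  rw [xiMu_eq]
  have hm : IsMultiplicative ((pow e : ArithmeticFunction ℤ) * μ) :=
    (isMultiplicative_pow.natCast).mul isMultiplicative_moebius
  rw [hm.multiplicative_factorization _ hd.ne']
  rw [Finsupp.prod]
  apply Finset.prod_pos
  intro p hp
  have hpp : p.Prime := Nat.prime_of_mem_primeFactors (by simpa using hp)
  set k := d.factorization p with hk
  have hk1 : 1 ≤ k := (Nat.Prime.factorization_pos_of_dvd hpp hd.ne'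
    (Nat.dvd_of_mem_primeFactors (by simpa using hp)))
  -- compute value at prime power
  have : ((pow e : ArithmeticFunction ℤ) * μ) (p ^ k) = (p:ℤ)^(k*e) - (p:ℤ)^((k-1)*e) :=
    xiMu_prime_pow e hpp k hk1
  rw [this]
  have : (k-1)*e < k*e := (Nat.mul_lt_mul_right he).mpr (by omega)
  have h2 : (p:ℤ) ^ ((k-1)*e) < (p:ℤ)^(k*e) := by
    apply pow_lt_pow_right₀ (by exact_mod_cast hpp.one_lt) this
  omega
end XiMuAux

theorem alphaES_pos (e : ℕ) (he : 0 < e) (S : Finset ℕ)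
    (hpos : ∀ a ∈ S, 0 < a) (hgcd : ∀ a ∈ S, ∀ b ∈ S, Nat.gcd a b ∈ S) :
    ∀ x ∈ S, 0 < alphaES e S x := by
  intro x hx
  have hx0 : 0 < x := hpos x hx
  unfold alphaES
  apply Finset.sum_pos
  · intro d hd
    exact xiMu_pos he (Nat.pos_of_mem_divisors (Finset.mem_filter.mp hd).1)
  · refine ⟨x, Finset.mem_filter.mpr ⟨Nat.mem_divisors_self x hx0.ne', ?_⟩⟩
    intro y hy hyx hdvd
    exact absurd (Nat.le_of_dvd (hpos y hy) hdvd) (not_le.mpr hyx)
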